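/- arXiv:1903.06977 — 2 statements merged into one kernel-verified Lean document; each statement's English description precedes it below -/
import Mathlib

section
/- Let (X, μ, T) be a measure-preserving dynamical system with μ a probability measure, and let (B_m)_{m≥1} be measurable targets with μ(B_m) → 0 and μ(B_m) > 0 for all m. Assume that for every t ∈ ℝ, G_{B_m}(t) := limsup_{m→∞} μ({x ∈ X : τ_{B_m}(x) ≤ t/μ(B_m)}) < 1. If μ(E_ah) = 1, then for every c ∈ ℝ we have μ(B_m) ≥ c/m for all sufficiently large m. -/
open MeasureTheory Filter Set
open scoped ENNReal

/-- The set of eventually always hitting points: there is `m₀` such that for every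
`m ≥ m₀` the orbit segment `x, T x, …, T^[m-1] x` meets `B m`. -/
def eahSet {X : Type*} (T : X → X) (B : ℕ → Set X) : Set X :=
  {x | ∃ m₀ : ℕ, ∀ k : ℕ, m₀ ≤ k → ∃ i : ℕ, i < k ∧ T^[i] x ∈ B k}

/-- The set of points whose first hitting time to `E` is at most `s`, i.e.
`{x : τ_E(x) ≤ s}` where `τ_E(x) = inf {i ≥ 1 : T^i x ∈ E}`. -/
def hitBy {X : Type*} (T : X → X) (E : Set X) (s : ℝ) : Set X :=
  {x | ∃ i : ℕ, 1 ≤ i ∧ (i : ℝ) ≤ s ∧ T^[i] x ∈ E}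

/-- For a probability-measure-preserving system with targets of positive measure
tending to zero, assume that for every `t ∈ ℝ`,
`G(t) = limsup_m μ {x : τ_{B_m}(x) ≤ t / μ(B_m)} < 1`. If the set of eventually
always hitting points has full measure, then for every `c ∈ ℝ` we have
`μ (B m) ≥ c / m` for all sufficiently large `m`. -/
theorem eah_full_necessary_HTS {X : Type*} [MeasurableSpace X]
    (μ : Measure X) [IsProbabilityMeasure μ] (T : X → X)
    (hT : MeasurePreserving T μ μ)
    (B : ℕ → Set X) (hmeas : ∀ m, MeasurableSet (B m))
    (hpos : ∀ m, 0 < μ (B m))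
    (hlim : Tendsto (fun m => μ (B m)) atTop (nhds 0))
    (hG : ∀ t : ℝ,
      Filter.limsup (fun m : ℕ => μ (hitBy T (B m) (t / (μ (B m)).toReal))) atTop < 1)
    (hfull : μ (eahSet T B) = 1) :
    ∀ c : ℝ, ∀ᶠ m : ℕ in atTop, ENNReal.ofReal (c / m) ≤ μ (B m) := by
  intro c
  by_contra hcon
  rw [Filter.not_eventually] at hcon
  have hc' : ∃ᶠ m : ℕ in atTop, μ (B m) < ENNReal.ofReal (c / m) :=
    hcon.mono fun m h => lt_of_not_ge h
  set f : ℕ → ℝ≥0∞ := fun m => μ (hitBy T (B m) (c / (μ (B m)).toReal)) with hf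
  have hL : limsup f atTop < 1 := hG c
  obtain ⟨b, hLb, hb1⟩ := exists_between hL
  obtain ⟨b', hbb', hb'1⟩ := exists_between hb1
  have hη : (0 : ℝ≥0∞) < b' - b := tsub_pos_of_lt hbb'
  have hev1 : ∀ᶠ m : ℕ in atTop, f m < b := eventually_lt_of_limsup_lt hLb
  have hev2 : ∀ᶠ m : ℕ in atTop, μ (B m) < b' - b := hlim.eventually (gt_mem_nhds hη)
  set A : ℕ → Set X := fun m₀ => {x | ∀ k : ℕ, m₀ ≤ k → ∃ i : ℕ, i < k ∧ T^[i] x ∈ B k}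
    with hA
  have hmono : Monotone A := fun a b hab x hx k hk => hx k (hab.trans hk)
  have hU : eahSet T B = ⋃ m₀, A m₀ := by
    ext x; simp [eahSet, hA, Set.mem_iUnion]
  have hsup : (⨆ m₀, μ (A m₀)) = 1 := by
    rw [← hmono.directed_le.measure_iUnion, ← hU, hfull]
  have key : ∀ m₀ : ℕ, μ (A m₀) ≤ b' := by
    intro m₀
    obtain ⟨m, hbad, hm₀, hfm, hBm⟩ :=
      (hc'.and_eventually ((eventually_ge_atTop m₀).and (hev1.and hev2))).exists
    obtain ⟨hm₀, hfm, hBm⟩ := hm₀, hfm, hBm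
    have hcm : 0 < c / (m : ℝ) :=
      ENNReal.ofReal_pos.mp ((hpos m).trans hbad)
    have hmne : (m : ℝ) ≠ 0 := by
      intro h
      rw [h, div_zero] at hcm
      exact lt_irrefl _ hcm
    have hfin : μ (B m) ≠ ⊤ := measure_ne_top μ _
    have hμlt : (μ (B m)).toReal < c / m :=
      (ENNReal.lt_ofReal_iff_toReal_lt hfin).mp hbad
    have hμpos : 0 < (μ (B m)).toReal := ENNReal.toReal_pos (hpos m).ne' hfin
    have hsub : A m₀ ⊆ B m ∪ hitBy T (B m) (c / (μ (B m)).toReal) := by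
      intro x hx
      obtain ⟨i, him, hiB⟩ := hx m hm₀
      rcases Nat.eq_zero_or_pos i with rfl | hi
      · left; simpa using hiB
      · right
        refine ⟨i, hi, ?_, hiB⟩
        rw [le_div_iff₀ hμpos]
        have hlt : (i : ℝ) * (μ (B m)).toReal < (m : ℝ) * (c / m) :=
          mul_lt_mul'' (by exact_mod_cast him) hμlt (by positivity) hμpos.le
        rw [mul_div_cancel₀ _ hmne] at hlt; exact hlt.le
    calc μ (A m₀) ≤ μ (B m ∪ hitBy T (B m) (c / (μ (B m)).toReal)) := measure_mono hsub
      _ ≤ μ (B m) + f m := measure_union_le _ _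
      _ ≤ (b' - b) + b := add_le_add hBm.le hfm.le
      _ = b' := tsub_add_cancel_of_le hbb'.le
  have : (1 : ℝ≥0∞) ≤ b' := hsup ▸ iSup_le key
  exact absurd (this.trans_lt hb'1) (lt_irrefl _)
end

section
/- Let (X, μ, T) be an ergodic measure-preserving dynamical system with μ a probability measure, and let (B_m)_{m≥1} be a nested sequence of measurable targets with μ(B_m) → 0 and μ(B_m) > 0 for all m. Assume that for every t ∈ ℝ, G_{B_m}(t) := limsup_{m→∞} μ({x ∈ X : τ_{B_m}(x) ≤ t/μ(B_m)}) < 1. If there exists c ∈ ℝ such that μ(B_m) ≤ c/m for infinitely many m, then μ(E_ah) = 0. -/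
open MeasureTheory Filter Set
open scoped ENNReal

/-- For an ergodic probability-measure-preserving system and a nested sequence of
targets of positive measure tending to zero, assume that for every `t ∈ ℝ`,
`G(t) = limsup_m μ {x : τ_{B_m}(x) ≤ t / μ(B_m)} < 1`. If there is `c ∈ ℝ` with
`μ (B m) ≤ c / m` for infinitely many `m`, then the set of eventually always
hitting points has measure zero. -/
theorem eah_zero_sufficient_HTS {X : Type*} [MeasurableSpace X]
    (μ : Measure X) [IsProbabilityMeasure μ] (T : X → X) (hT : Ergodic T μ)
    (B : ℕ → Set X) (hmeas : ∀ m, MeasurableSet (B m))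
    (hnested : ∀ m, B (m + 1) ⊆ B m)
    (hpos : ∀ m, 0 < μ (B m))
    (hlim : Tendsto (fun m => μ (B m)) atTop (nhds 0))
    (hG : ∀ t : ℝ,
      Filter.limsup (fun m : ℕ => μ (hitBy T (B m) (t / (μ (B m)).toReal))) atTop < 1)
    (hc : ∃ c : ℝ, ∃ᶠ m : ℕ in atTop, μ (B m) ≤ ENNReal.ofReal (c / m)) :
    μ (eahSet T B) = 0 := by
  obtain ⟨c, hc⟩ := hc
  have hmT : Measurable T := hT.toMeasurePreserving.measurable
  have hanti : Antitone B := antitone_nat_of_succ_le hnested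
  -- measurability of eahSet
  have heq : eahSet T B = ⋃ m₀, ⋂ k, ⋂ _ : m₀ ≤ k, ⋃ i, ⋃ _ : i < k, T^[i] ⁻¹' B k := by
    ext x; simp [eahSet]
  have hmeasE : MeasurableSet (eahSet T B) := by
    rw [heq]
    exact MeasurableSet.iUnion fun m₀ => .iInter fun k => .iInter fun _ => .iUnion fun i =>
      .iUnion fun _ => (hmeas k).preimage (hmT.iterate i)
  -- the intersection of targets is null
  have hnull : μ (⋂ m, B m) = 0 := by
    refine le_antisymm ?_ zero_le
    exact ge_of_tendsto' hlim fun m => measure_mono (iInter_subset _ m)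
  -- eahSet is a.e. contained in its preimage
  have hle : (eahSet T B : Set X) ≤ᵐ[μ] T ⁻¹' (eahSet T B) := by
    have hae : ∀ᵐ x ∂μ, x ∉ ⋂ m, B m := by
      exact measure_eq_zero_iff_ae_notMem.1 hnull
    filter_upwards [hae] with x hx hxE
    obtain ⟨M, hM⟩ : ∃ M, x ∉ B M := by simpa [Set.mem_iInter] using hx
    obtain ⟨m₀, h0⟩ := hxE
    refine ⟨max m₀ M, fun k hk => ?_⟩
    obtain ⟨i, hik, hiB⟩ := h0 (k + 1)
      (((le_max_left _ _).trans hk).trans (Nat.le_succ k))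
    match i, hik, hiB with
    | 0, _, hiB =>
      exact absurd (hanti ((le_max_right m₀ M).trans (hk.trans (Nat.le_succ k))) hiB) hM
    | i + 1, hik, hiB =>
      refine ⟨i, by omega, ?_⟩
      have : T^[i] (T x) ∈ B (k + 1) := by
        rwa [← Function.iterate_succ_apply]
      exact hnested k this
  -- quantitative bound: μ (eahSet) ≤ η < 1
  obtain ⟨K, hK1, hK2⟩ := exists_between (hG c)
  obtain ⟨η, hη1, hη2⟩ := exists_between hK2
  have ev1 : ∀ᶠ m : ℕ in atTop,
      μ (hitBy T (B m) (c / (μ (B m)).toReal)) < K :=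
    Filter.eventually_lt_of_limsup_lt hK1
  have ev2 : ∀ᶠ m : ℕ in atTop, μ (B m) < η - K :=
    hlim.eventually_lt_const (tsub_pos_of_lt hη1)
  have key : ∀ n : ℕ, μ {x | ∀ k : ℕ, n ≤ k → ∃ i : ℕ, i < k ∧ T^[i] x ∈ B k} ≤ η := by
    intro n
    obtain ⟨m, hgood, hm1, hm2, hmn⟩ :=
      (hc.and_eventually (ev1.and (ev2.and (eventually_ge_atTop (max n 1))))).exists
    have hBpos : 0 < (μ (B m)).toReal :=
      ENNReal.toReal_pos (hpos m).ne' (measure_ne_top μ _)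
    have hm1' : (1 : ℕ) ≤ m := le_trans (le_max_right n 1) hmn
    have hmpos : (0 : ℝ) < m := by exact_mod_cast hm1'
    have htle : (μ (B m)).toReal ≤ c / m := by
      have h1 : (μ (B m)).toReal ≤ max (c / m) 0 := by
        have := ENNReal.toReal_mono ENNReal.ofReal_ne_top hgood
        rwa [ENNReal.toReal_ofReal'] at this
      rcases le_or_gt (c / (m : ℝ)) 0 with h | h
      · exfalso
        have : (μ (B m)).toReal ≤ 0 := by rwa [max_eq_right h] at h1
        linarith
      · rwa [max_eq_left h.le] at h1
    have hmle : (m : ℝ) ≤ c / (μ (B m)).toReal := by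
      rw [le_div_iff₀ hBpos]
      calc (m : ℝ) * (μ (B m)).toReal ≤ (m : ℝ) * (c / m) :=
            mul_le_mul_of_nonneg_left htle hmpos.le
        _ = c := by field_simp
    have hsub : {x | ∀ k : ℕ, n ≤ k → ∃ i : ℕ, i < k ∧ T^[i] x ∈ B k} ⊆
        B m ∪ hitBy T (B m) (c / (μ (B m)).toReal) := by
      intro x hx
      obtain ⟨i, him, hiB⟩ := hx m (le_trans (le_max_left n 1) hmn)
      rcases Nat.eq_zero_or_pos i with rfl | hi
      · exact Or.inl hiB
      · refine Or.inr ⟨i, hi, le_trans ?_ hmle, hiB⟩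
        exact_mod_cast him.le
    calc μ {x | ∀ k : ℕ, n ≤ k → ∃ i : ℕ, i < k ∧ T^[i] x ∈ B k}
        ≤ μ (B m ∪ hitBy T (B m) (c / (μ (B m)).toReal)) := measure_mono hsub
      _ ≤ μ (B m) + μ (hitBy T (B m) (c / (μ (B m)).toReal)) := measure_union_le _ _
      _ ≤ (η - K) + K := add_le_add hm2.le hm1.le
      _ = η := tsub_add_cancel_of_le hη1.le
  have hbound : μ (eahSet T B) ≤ η := by
    have hU : eahSet T B = ⋃ n : ℕ, {x | ∀ k : ℕ, n ≤ k → ∃ i : ℕ, i < k ∧ T^[i] x ∈ B k} := by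
      ext x; simp [eahSet, mem_iUnion]
    have hdir : Directed (· ⊆ ·)
        (fun n : ℕ => {x | ∀ k : ℕ, n ≤ k → ∃ i : ℕ, i < k ∧ T^[i] x ∈ B k}) := by
      refine (Monotone.directed_le ?_)
      intro a b hab x hx k hk
      exact hx k (hab.trans hk)
    rw [hU, hdir.measure_iUnion]
    exact iSup_le key
  -- ergodic dichotomy
  rcases hT.ae_empty_or_univ_of_ae_le_preimage hmeasE.nullMeasurableSet hle with h | h
  · simpa using measure_congr h
  · exfalso
    have : μ (eahSet T B) = 1 := by
      rw [measure_congr h, measure_univ]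
    rw [this] at hbound
    exact absurd (lt_of_le_of_lt hbound hη2) (lt_irrefl _)
end
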